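/- Let Z : ℝ → ℝ be continuous and 2π-periodic, N, M coprime positive integers, Δω a real number with V₀ := (1/(2π))∫₀^{2π} Y(η)² dη > 0, where Y(η) = (1/N) ∑_{j=0}^{N−1} Z((M/N)(2πj+η)). Define v_m(η) = −(Δω/V₀)·Y(η). Then the interaction function of v_m satisfies Λ_{v_m}(0) = −Δω, i.e. Δω + (1/(2π)) ∫₀^{2π} Z(Mθ) v_m(Nθ) dθ = 0. -/

import Mathlib

open MeasureTheory Real Finset

theorem min_energy_waveform_satisfies_constraint
    (Z : ℝ → ℝ) (hZ : Continuous Z) (hper : ∀ θ, Z (θ + 2 * π) = Z θ)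
    (N M : ℕ) (hN : 0 < N) (hM : 0 < M) (hcop : Nat.Coprime N M)
    (Δω : ℝ) (Y : ℝ → ℝ)
    (hY : ∀ η, Y η = (1 / (N : ℝ)) *
      ∑ j ∈ Finset.range N, Z ((M / (N : ℝ)) * (2 * π * j + η)))
    (V₀ : ℝ) (hV₀ : V₀ = (1 / (2 * π)) * ∫ η in (0:ℝ)..(2 * π), (Y η) ^ 2)
    (hV₀pos : 0 < V₀)
    (vm : ℝ → ℝ) (hvm : ∀ η, vm η = -(Δω / V₀) * Y η) :
    Δω + (1 / (2 * π)) * ∫ θ in (0:ℝ)..(2 * π), Z (M * θ) * vm (N * θ) = 0 := by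
  haveI : NeZero N := ⟨hN.ne'⟩
  have hNR : (N:ℝ) ≠ 0 := Nat.cast_ne_zero.mpr hN.ne'
  have hπpos : (0:ℝ) < 2*π := by positivity
  have hZper : Function.Periodic Z (2*π) := hper
  -- the rescaled PRC
  set g : ℝ → ℝ := fun θ => Z (M*θ) with hg_def
  have hgc : Continuous g := hZ.comp (continuous_const.mul continuous_id)
  have hgper : Function.Periodic g (2*π) := by
    intro θ
    have h2 := (hZper.nat_mul M) (M*θ)
    simp only [hg_def]
    rw [mul_add]
    exact h2
  -- continuity of Y
  have hYc : Continuous Y := by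
    have : Y = fun η => (1 / (N : ℝ)) *
        ∑ j ∈ Finset.range N, Z ((M / (N : ℝ)) * (2 * π * j + η)) := funext hY
    rw [this]
    exact continuous_const.mul (continuous_finset_sum _ fun j _ =>
      hZ.comp (continuous_const.mul (continuous_const.add continuous_id)))
  -- Y is 2π-periodic
  have hYper : Function.Periodic Y (2*π) := by
    intro η
    rw [hY, hY]
    congr 1
    set t : ℕ → ℝ := fun j => Z ((M/(N:ℝ))*(2*π*j + η)) with htdef
    have ht : ∀ j:ℕ, Z ((M/(N:ℝ))*(2*π*j + (η+2*π))) = t (j+1) := by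
      intro j
      simp only [htdef]
      congr 1
      push_cast
      ring
    simp only [ht]
    have htN : t N = t 0 := by
      simp only [htdef]
      have he : (M/(N:ℝ))*(2*π*(N:ℕ) + η) = (M/(N:ℝ))*(2*π*(0:ℕ) + η) + (M:ℕ)*(2*π) := by
        push_cast
        field_simp
        ring
      rw [he]
      exact (hZper.nat_mul M) _
    have h1 : ∑ j ∈ range (N+1), t j = ∑ j ∈ range N, t (j+1) + t 0 :=
      Finset.sum_range_succ' t N
    have h2 : ∑ j ∈ range (N+1), t j = ∑ j ∈ range N, t j + t N :=
      Finset.sum_range_succ t N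
    rw [htN] at h2
    linarith [h1, h2]
  -- Y at N*θ
  have hYN : ∀ θ:ℝ, Y ((N:ℝ)*θ) = (1/(N:ℝ)) * ∑ j ∈ range N, g (θ + 2*π*j/(N:ℝ)) := by
    intro θ
    rw [hY]
    congr 1
    refine Finset.sum_congr rfl fun j _ => ?_
    simp only [hg_def]
    congr 1
    field_simp
    ring
  -- the correlation function
  set J : ℝ → ℝ := fun s => ∫ θ in (0:ℝ)..(2*π), g θ * g (θ + s) with hJ_def
  have hJper : Function.Periodic J (2*π) := by
    intro s
    simp only [hJ_def]
    have h : ∀ θ:ℝ, g (θ + (s + 2*π)) = g (θ + s) := by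
      intro θ
      rw [← add_assoc]
      exact hgper _
    simp only [h]
  have hJz : ∀ (s:ℝ) (q:ℤ), J (s + q*(2*π)) = J s := fun s q => (hJper.int_mul q) s
  -- shift invariance
  have hshift : ∀ c s : ℝ, (∫ θ in (0:ℝ)..(2*π), g (θ+c) * g ((θ+c)+s)) = J s := by
    intro c s
    have h1 : (∫ θ in (0:ℝ)..(2*π), (fun x => g x * g (x+s)) (θ + c))
        = ∫ θ in (0+c)..(2*π+c), g θ * g (θ+s) :=
      intervalIntegral.integral_comp_add_right (fun x => g x * g (x+s)) c
    have hper2 : Function.Periodic (fun θ => g θ * g (θ+s)) (2*π) := by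
      intro θ
      simp only
      rw [hgper θ, show θ + 2*π + s = (θ + s) + 2*π by ring, hgper (θ+s)]
    have h2 := hper2.intervalIntegral_add_eq c 0
    simp only at h1 h2 ⊢
    rw [h1, show (0:ℝ)+c = c by ring, show 2*π+c = c + 2*π by ring, h2, zero_add]
  -- expansion of the LHS integral
  have hLHS : (∫ θ in (0:ℝ)..(2*π), g θ * Y ((N:ℝ)*θ))
      = (1/(N:ℝ)) * ∑ j ∈ range N, J (2*π*j/(N:ℝ)) := by
    have hE : ∀ θ:ℝ, g θ * Y ((N:ℝ)*θ)
        = ∑ j ∈ range N, (1/(N:ℝ)) * (g θ * g (θ + 2*π*j/(N:ℝ))) := by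
      intro θ
      rw [hYN θ, Finset.mul_sum, Finset.mul_sum]
      refine Finset.sum_congr rfl fun j _ => ?_
      ring
    simp only [hE]
    rw [intervalIntegral.integral_finset_sum
      (fun j _ => Continuous.intervalIntegrable (by fun_prop) _ _)]
    rw [Finset.mul_sum]
    refine Finset.sum_congr rfl fun j _ => ?_
    rw [intervalIntegral.integral_const_mul]
  -- the ZMod permutation argument
  set f : ℤ → ℝ := fun m => J (2*π*m/(N:ℝ)) with hf_def
  have hf_add : ∀ (m : ℤ) (q:ℤ), f (m + q*N) = f m := by
    intro m q
    simp only [hf_def]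
    have he : 2*π*((m:ℝ) + (q:ℝ)*(N:ℝ))/(N:ℝ) = 2*π*(m:ℝ)/(N:ℝ) + (q:ℝ)*(2*π) := by
      field_simp
    push_cast
    rw [he]
    exact hJz _ q
  have hfmod : ∀ m : ℤ, f m = f (m % N) := by
    intro m
    conv_lhs => rw [← Int.emod_add_mul_ediv m N]
    rw [show m % N + (N:ℤ)*(m/N) = m % N + (m/N)*(N:ℤ) by ring]
    exact hf_add _ _
  set F : ZMod N → ℝ := fun x => f x.val with hF_def
  have hfF : ∀ m : ℤ, f m = F (m : ZMod N) := by
    intro m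
    rw [hfmod m]
    simp only [hF_def]
    rw [← ZMod.val_intCast m]
  have hsum_univ : ∀ G : ZMod N → ℝ, ∑ x : ZMod N, G x = ∑ k ∈ range N, G (k : ZMod N) := by
    intro G
    refine Finset.sum_nbij' (i := fun x => x.val) (j := fun k => (k : ZMod N))
      ?_ ?_ ?_ ?_ ?_
    · intro x _
      exact Finset.mem_range.mpr (ZMod.val_lt x)
    · intro k _
      exact Finset.mem_univ _
    · intro x _
      exact ZMod.natCast_zmod_val x
    · intro k hk
      exact ZMod.val_cast_of_lt (Finset.mem_range.mp hk)
    · intro x _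
      rw [ZMod.natCast_zmod_val x]
  have hperm : ∀ j ∈ range N,
      ∑ k ∈ range N, J (2*π*k/(N:ℝ) - 2*π*j/(N:ℝ)) = ∑ k ∈ range N, J (2*π*k/(N:ℝ)) := by
    intro j _
    have h1 : ∀ k:ℕ, J (2*π*k/(N:ℝ) - 2*π*j/(N:ℝ)) = f ((k:ℤ) - (j:ℤ)) := by
      intro k
      simp only [hf_def]
      congr 1
      try push_cast
      try ring
    have h2 : ∀ k:ℕ, J (2*π*k/(N:ℝ)) = f (k:ℤ) := by
      intro k
      simp only [hf_def]
      congr 1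
      try push_cast
      try ring
    simp only [h1, h2, hfF]
    push_cast
    rw [← hsum_univ (fun x => F (x - (j : ZMod N))), ← hsum_univ F]
    exact Fintype.sum_equiv (Equiv.subRight ((j : ZMod N))) _ _ (fun x => rfl)
  -- expansion of the square integral
  have hRHS : (∫ θ in (0:ℝ)..(2*π), (Y ((N:ℝ)*θ))^2)
      = (1/(N:ℝ)) * ∑ j ∈ range N, J (2*π*j/(N:ℝ)) := by
    have hE2 : ∀ θ:ℝ, (Y ((N:ℝ)*θ))^2
        = ∑ j ∈ range N, ∑ k ∈ range N,
            ((1/(N:ℝ))^2) * (g (θ + 2*π*j/(N:ℝ)) * g (θ + 2*π*k/(N:ℝ))) := by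
      intro θ
      rw [hYN θ, mul_pow, sq (∑ j ∈ range N, g (θ + 2*π*j/(N:ℝ))), Finset.sum_mul_sum,
        Finset.mul_sum]
      refine Finset.sum_congr rfl fun j _ => ?_
      rw [Finset.mul_sum]
    simp only [hE2]
    rw [intervalIntegral.integral_finset_sum
      (fun j _ => Continuous.intervalIntegrable (by fun_prop) _ _)]
    have hjk : ∀ j ∈ range N, (∫ θ in (0:ℝ)..(2*π), ∑ k ∈ range N,
        ((1/(N:ℝ))^2) * (g (θ + 2*π*j/(N:ℝ)) * g (θ + 2*π*k/(N:ℝ))))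
        = ((1/(N:ℝ))^2) * ∑ k ∈ range N, J (2*π*k/(N:ℝ) - 2*π*j/(N:ℝ)) := by
      intro j _
      rw [intervalIntegral.integral_finset_sum
        (fun k _ => Continuous.intervalIntegrable (by fun_prop) _ _)]
      rw [Finset.mul_sum]
      refine Finset.sum_congr rfl fun k _ => ?_
      rw [intervalIntegral.integral_const_mul]
      congr 1
      have harg : ∀ θ:ℝ, g (θ + 2*π*k/(N:ℝ))
          = g ((θ + 2*π*j/(N:ℝ)) + (2*π*k/(N:ℝ) - 2*π*j/(N:ℝ))) := by
        intro θ
        congr 1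
        ring
      calc (∫ θ in (0:ℝ)..(2*π), g (θ + 2*π*j/(N:ℝ)) * g (θ + 2*π*k/(N:ℝ)))
          = ∫ θ in (0:ℝ)..(2*π), g (θ + 2*π*j/(N:ℝ))
              * g ((θ + 2*π*j/(N:ℝ)) + (2*π*k/(N:ℝ) - 2*π*j/(N:ℝ))) := by
            simp only [harg]
        _ = J (2*π*k/(N:ℝ) - 2*π*j/(N:ℝ)) := hshift _ _
    rw [Finset.sum_congr rfl hjk]
    have : ∑ j ∈ range N, ((1/(N:ℝ))^2) * ∑ k ∈ range N, J (2*π*k/(N:ℝ) - 2*π*j/(N:ℝ))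
        = ∑ j ∈ range N, ((1/(N:ℝ))^2) * ∑ k ∈ range N, J (2*π*k/(N:ℝ)) := by
      refine Finset.sum_congr rfl fun j hj => ?_
      rw [hperm j hj]
    rw [this, Finset.sum_const, Finset.card_range]
    field_simp
    rw [nsmul_eq_mul]
    field_simp
  -- scaling step
  have hsq : (∫ θ in (0:ℝ)..(2*π), (Y ((N:ℝ)*θ))^2) = ∫ η in (0:ℝ)..(2*π), (Y η)^2 := by
    have h1 := intervalIntegral.integral_comp_mul_left (a := (0:ℝ)) (b := 2*π)
      (fun η => (Y η)^2) hNR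
    have hperY2 : Function.Periodic (fun η => (Y η)^2) (2*π) := by
      intro η
      simp only
      rw [hYper η]
    have h2 := hperY2.intervalIntegral_add_zsmul_eq (N:ℤ) 0
      (fun t1 t2 => Continuous.intervalIntegrable (by fun_prop) t1 t2)
    rw [h1]
    rw [show (N:ℝ)*0 = (0:ℝ) by ring, show (N:ℝ)*(2*π) = (0:ℝ) + ((N:ℤ) • (2*π)) by
      rw [zsmul_eq_mul]; push_cast; ring]
    rw [h2]
    rw [zero_add]
    simp only [zsmul_eq_mul, smul_eq_mul, Int.cast_natCast]
    field_simp
  -- put it together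
  have hIY : (∫ η in (0:ℝ)..(2*π), (Y η)^2) = 2*π*V₀ := by
    rw [hV₀]
    field_simp
  have hmain : (∫ θ in (0:ℝ)..(2*π), Z ((M:ℝ)*θ) * vm ((N:ℝ)*θ))
      = -(Δω/V₀) * (2*π*V₀) := by
    have hE : ∀ θ:ℝ, Z ((M:ℝ)*θ) * vm ((N:ℝ)*θ) = -(Δω/V₀) * (g θ * Y ((N:ℝ)*θ)) := by
      intro θ
      rw [hvm]
      simp only [hg_def]
      ring
    simp only [hE]
    rw [intervalIntegral.integral_const_mul, hLHS, ← hRHS, hsq, hIY]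
  rw [hmain]
  field_simp
  ring
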